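/- Let X be a reflexive Banach space, Ω₁, Ω₂ ⊆ X closed convex sets with int(Ω₁ − Ω₂) ≠ ∅ and 0 ∈ core(Ω₁ − Ω₂), and let x̄ ∈ Ω₁ ∩ Ω₂. Then for every r > 0 one has 0 ∈ int(Ω₁ − (Ω₂ ∩ B(x̄; r))), i.e., the bounded extremality qualification condition holds at x̄. -/

import Mathlib

open Pointwise Metric Filter Finset Topology

lemma baire_aux {X : Type*} [NormedAddCommGroup X] [NormedSpace ℝ X] [CompleteSpace X]
    (S : Set X) (hcl : IsClosed S) (hconv : Convex ℝ S) (h0 : (0:X) ∈ S)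
    (hsymm : ∀ x ∈ S, -x ∈ S)
    (habs : ∀ v : X, ∃ γ > 0, ∀ t : ℝ, |t| < γ → t • v ∈ S) :
    (0:X) ∈ interior S := by
  have hstar : ∀ c : ℝ, 0 ≤ c → c ≤ 1 → ∀ s ∈ S, c • s ∈ S := by
    intro c hc0 hc1 s hs
    have := hconv hs h0 (a := c) (b := 1 - c) hc0 (by linarith) (by ring)
    simpa using this
  have hcover : (⋃ n : ℕ, ((n : ℝ) + 1) • S) = Set.univ := by
    ext v
    simp only [Set.mem_iUnion, Set.mem_univ, iff_true]
    obtain ⟨γ, hγ, hγS⟩ := habs v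
    set t₀ : ℝ := min (γ / 2) 1 with ht₀def
    have ht₀pos : 0 < t₀ := lt_min (by linarith) one_pos
    have ht₀lt : |t₀| < γ := by
      rw [abs_of_pos ht₀pos]
      exact lt_of_le_of_lt (min_le_left _ _) (by linarith)
    obtain ⟨n, hn⟩ := exists_nat_ge (1 / t₀)
    refine ⟨n, ?_⟩
    have hn1 : (1:ℝ) / t₀ ≤ (n:ℝ) + 1 := le_trans hn (by linarith)
    have hnpos : (0:ℝ) < (n:ℝ) + 1 := by positivity
    set c : ℝ := (((n:ℝ) + 1) * t₀)⁻¹ with hc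
    have hcpos : 0 < c := by positivity
    have hc1 : c ≤ 1 := by
      rw [hc, inv_le_one_iff₀]
      right
      rw [div_le_iff₀ ht₀pos] at hn1
      linarith [hn1]
    refine ⟨c • (t₀ • v), hstar c hcpos.le hc1 _ (hγS t₀ ht₀lt), ?_⟩
    show ((n:ℝ) + 1) • (c • t₀ • v) = v
    rw [smul_smul, smul_smul]
    have h1 : ((n:ℝ) + 1) * (c * t₀) = 1 := by
      rw [hc]; field_simp
    rw [mul_assoc, h1, one_smul]
  have hclosed : ∀ n : ℕ, IsClosed (((n : ℝ) + 1) • S) := fun n =>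
    hcl.smul_of_ne_zero (by positivity)
  obtain ⟨n, hn⟩ := nonempty_interior_of_iUnion_of_closed hclosed hcover
  have hne : (0:ℝ) < (n:ℝ) + 1 := by positivity
  rw [interior_smul₀ hne.ne' S] at hn
  obtain ⟨y, hy⟩ := hn
  obtain ⟨x, hx, rfl⟩ := hy
  have hnegx : -x ∈ interior S := by
    obtain ⟨U, hUS, hUopen, hxU⟩ := mem_interior.1 hx
    refine mem_interior.2 ⟨-U, ?_, hUopen.neg, by simpa using hxU⟩
    intro z hz
    rw [Set.mem_neg] at hz
    have := hsymm _ (hUS hz)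
    simpa using this
  have h00 : (0:X) = (1/2 : ℝ) • x + (1/2 : ℝ) • (-x) := by
    rw [smul_neg, add_neg_cancel]
  rw [h00]
  exact hconv.interior hx hnegx (by norm_num) (by norm_num) (by norm_num)


lemma convex_series_mem {X : Type*} [NormedAddCommGroup X] [NormedSpace ℝ X]
    (C : Set X) (hcl : IsClosed C) (hc : Convex ℝ C) (c : ℕ → X) (hmem : ∀ k, c k ∈ C)
    (L : X)
    (hL : Tendsto (fun n => ∑ k ∈ Finset.range n, ((2:ℝ)^(k+1))⁻¹ • c k) atTop (𝓝 L)) :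
    L ∈ C := by
  set t : ℕ → ℝ := fun n => 1 - (1/2:ℝ)^n with ht
  have htpos : ∀ n : ℕ, 0 < t (n+1) := by
    intro n
    have : (1/2:ℝ)^(n+1) < 1 := by
      apply pow_lt_one₀ (by norm_num) (by norm_num) (Nat.succ_ne_zero n)
    simp only [ht]; linarith
  have hsum : ∀ n : ℕ, ∑ k ∈ Finset.range n, ((2:ℝ)^(k+1))⁻¹ = t n := by
    intro n
    have h := geom_sum_eq (by norm_num : (1/2:ℝ) ≠ 1) n
    have : ∀ k : ℕ, ((2:ℝ)^(k+1))⁻¹ = (1/2:ℝ)^k * (1/2) := by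
      intro k; rw [pow_succ]; field_simp; rw [← mul_pow]; norm_num
    rw [Finset.sum_congr rfl (fun k _ => this k), ← Finset.sum_mul, h, ht]
    field_simp
    ring
  -- normalized partial sums are in C
  have hq : ∀ n : ℕ, (t (n+1))⁻¹ • (∑ k ∈ Finset.range (n+1), ((2:ℝ)^(k+1))⁻¹ • c k) ∈ C := by
    intro n
    rw [Finset.smul_sum]
    have := hc.sum_mem (t := Finset.range (n+1))
      (w := fun k => (t (n+1))⁻¹ * ((2:ℝ)^(k+1))⁻¹) (z := c)
      (fun i _ => mul_nonneg (inv_nonneg.2 (htpos n).le) (by positivity))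
      (by rw [← Finset.mul_sum, hsum, inv_mul_eq_div]; exact div_self (htpos n).ne')
      (fun i _ => hmem i)
    simpa [smul_smul] using this
  -- limit
  have htend1 : Tendsto (fun n : ℕ => (t (n+1))⁻¹) atTop (𝓝 1) := by
    have h0 : Tendsto (fun n : ℕ => (1/2:ℝ)^(n+1)) atTop (𝓝 0) :=
      (tendsto_pow_atTop_nhds_zero_of_lt_one (by norm_num) (by norm_num)).comp
        (tendsto_add_atTop_nat 1)
    have : Tendsto (fun n : ℕ => t (n+1)) atTop (𝓝 1) := by
      have h1 : Tendsto (fun n : ℕ => 1 - (1/2:ℝ)^(n+1)) atTop (𝓝 (1 - 0)) :=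
        tendsto_const_nhds.sub h0
      simpa [ht] using h1
    have := this.inv₀ (by norm_num)
    simpa using this
  have hStend : Tendsto (fun n : ℕ => ∑ k ∈ Finset.range (n+1), ((2:ℝ)^(k+1))⁻¹ • c k)
      atTop (𝓝 L) := hL.comp (tendsto_add_atTop_nat 1)
  have : Tendsto (fun n : ℕ =>
      (t (n+1))⁻¹ • (∑ k ∈ Finset.range (n+1), ((2:ℝ)^(k+1))⁻¹ • c k)) atTop (𝓝 ((1:ℝ) • L)) :=
    htend1.smul hStend
  rw [one_smul] at this
  exact hcl.mem_of_tendsto this (Filter.Eventually.of_forall hq)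

lemma series_aux {X : Type*} [NormedAddCommGroup X] [NormedSpace ℝ X] [CompleteSpace X]
    (A K : Set X) (hclA : IsClosed A) (hcA : Convex ℝ A) (hclK : IsClosed K) (hcK : Convex ℝ K)
    (M : ℝ) (hbd : ∀ b ∈ K, ‖b‖ ≤ M)
    (δ : ℝ) (hδ : 0 < δ) (hball : ball (0:X) δ ⊆ closure (A - K)) :
    ball (0:X) (δ/2) ⊆ A - K := by
  have hne : (A - K).Nonempty := by
    have h0 : (closure (A - K)).Nonempty :=
      ⟨0, hball (mem_ball_zero_iff.2 (by simpa using hδ))⟩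
    exact closure_nonempty_iff.1 h0
  obtain ⟨e0, he0⟩ := hne
  rw [Set.mem_sub] at he0
  obtain ⟨a0, ha0, b0, hb0, rfl⟩ := he0
  have hM0 : 0 ≤ M := le_trans (norm_nonneg b0) (hbd b0 hb0)
  have key : ∀ z : X, ∃ p : X × X,
      ‖z‖ < δ → p.1 ∈ A ∧ p.2 ∈ K ∧ ‖z - (p.1 - p.2)‖ < δ/2 := by
    intro z
    by_cases h : ‖z‖ < δ
    · have hz : z ∈ closure (A - K) := hball (mem_ball_zero_iff.2 h)
      rw [Metric.mem_closure_iff] at hz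
      obtain ⟨e, he, hd⟩ := hz (δ/2) (by linarith)
      rw [Set.mem_sub] at he
      obtain ⟨a, ha, b, hb, rfl⟩ := he
      exact ⟨(a, b), fun _ => ⟨ha, hb, by rwa [dist_eq_norm] at hd⟩⟩
    · exact ⟨(a0, b0), fun hlt => absurd hlt h⟩
  choose g hg using key
  intro u hu
  rw [mem_ball_zero_iff] at hu
  set zseq : ℕ → X := fun n => Nat.rec u
    (fun k zk => zk - ((2:ℝ)^(k+1))⁻¹ •
      ((g ((2:ℝ)^(k+1) • zk)).1 - (g ((2:ℝ)^(k+1) • zk)).2)) n with hzseq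
  have hz0 : zseq 0 = u := rfl
  have hzsucc : ∀ k, zseq (k+1) = zseq k - ((2:ℝ)^(k+1))⁻¹ •
      ((g ((2:ℝ)^(k+1) • zseq k)).1 - (g ((2:ℝ)^(k+1) • zseq k)).2) := fun k => rfl
  set a : ℕ → X := fun k => (g ((2:ℝ)^(k+1) • zseq k)).1 with ha_def
  set b : ℕ → X := fun k => (g ((2:ℝ)^(k+1) • zseq k)).2 with hb_def
  have hinv : ∀ k, ‖zseq k‖ < δ / 2^(k+1) := by
    intro k
    induction k with
    | zero => rw [hz0]; simpa using hu
    | succ k ih =>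
      have hwn : ‖(2:ℝ)^(k+1) • zseq k‖ < δ := by
        rw [norm_smul, Real.norm_eq_abs, abs_of_pos (by positivity)]
        have h2 : ‖zseq k‖ * 2^(k+1) < δ := (lt_div_iff₀ (by positivity)).1 ih
        nlinarith [h2]
      have h3 := hg _ hwn
      have heq : zseq (k+1) = ((2:ℝ)^(k+1))⁻¹ • ((2:ℝ)^(k+1) • zseq k - (a k - b k)) := by
        rw [hzsucc k]
        conv_rhs => rw [smul_sub, smul_smul,
          inv_mul_cancel₀ (by positivity : ((2:ℝ)^(k+1)) ≠ 0), one_smul]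
      rw [heq, norm_smul, Real.norm_eq_abs, abs_of_pos (by positivity)]
      have h4 : ‖(2:ℝ)^(k+1) • zseq k - (a k - b k)‖ < δ/2 := h3.2.2
      have h5 : ((2:ℝ)^(k+1))⁻¹ * (δ/2) = δ / 2^(k+1+1) := by
        rw [pow_succ]; ring
      calc ((2:ℝ)^(k+1))⁻¹ * ‖(2:ℝ)^(k+1) • zseq k - (a k - b k)‖
          < ((2:ℝ)^(k+1))⁻¹ * (δ/2) := by
            apply mul_lt_mul_of_pos_left h4 (by positivity)
        _ = δ / 2^(k+1+1) := h5
  have hw : ∀ k, ‖(2:ℝ)^(k+1) • zseq k‖ < δ := by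
    intro k
    rw [norm_smul, Real.norm_eq_abs, abs_of_pos (by positivity)]
    have h2 : ‖zseq k‖ * 2^(k+1) < δ := (lt_div_iff₀ (by positivity)).1 (hinv k)
    nlinarith [h2]
  have hA : ∀ k, a k ∈ A := fun k => (hg _ (hw k)).1
  have hKb : ∀ k, b k ∈ K := fun k => (hg _ (hw k)).2.1
  have htel : ∀ n, ∑ k ∈ Finset.range n, ((2:ℝ)^(k+1))⁻¹ • (a k - b k) = u - zseq n := by
    intro n
    induction n with
    | zero => simp [hz0]
    | succ n ih =>
      rw [Finset.sum_range_succ, ih, hzsucc n]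
      abel
  have hztend : Tendsto zseq atTop (𝓝 0) := by
    apply squeeze_zero_norm (fun n => (hinv n).le)
    have hg2 : Tendsto (fun n:ℕ => (1/2:ℝ)^n) atTop (𝓝 0) :=
      tendsto_pow_atTop_nhds_zero_of_lt_one (by norm_num) (by norm_num)
    have h6 := (hg2.comp (tendsto_add_atTop_nat 1)).const_mul δ
    have h7 : (fun n:ℕ => δ * (1/2:ℝ)^(n+1)) = fun n:ℕ => δ / 2^(n+1) := by
      funext n; rw [one_div, inv_pow, div_eq_mul_inv]
    rw [mul_zero] at h6
    rw [← h7]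
    exact h6
  have htendd : Tendsto (fun n => ∑ k ∈ Finset.range n, ((2:ℝ)^(k+1))⁻¹ • (a k - b k))
      atTop (𝓝 u) := by
    simp only [htel]
    have := tendsto_const_nhds (x := u) (f := atTop (α := ℕ)) |>.sub hztend
    simpa using this
  have hsummable : Summable (fun k => ((2:ℝ)^(k+1))⁻¹ • b k) := by
    apply Summable.of_norm_bounded (g := fun k => (M/2) * (1/2:ℝ)^k)
      (summable_geometric_two.mul_left (M/2))
    intro k
    rw [norm_smul, Real.norm_eq_abs, abs_of_pos (by positivity)]
    have h8 : ((2:ℝ)^(k+1))⁻¹ * ‖b k‖ ≤ ((2:ℝ)^(k+1))⁻¹ * M :=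
      mul_le_mul_of_nonneg_left (hbd _ (hKb k)) (by positivity)
    have h9 : ((2:ℝ)^(k+1))⁻¹ * M = (M/2) * (1/2:ℝ)^k := by
      rw [one_div, inv_pow, pow_succ]; ring
    linarith [h8, h9.symm.le]
  set bb : X := ∑' k, ((2:ℝ)^(k+1))⁻¹ • b k with hbb
  have hbbsum : Tendsto (fun n => ∑ k ∈ Finset.range n, ((2:ℝ)^(k+1))⁻¹ • b k)
      atTop (𝓝 bb) := hsummable.hasSum.tendsto_sum_nat
  have hbbK : bb ∈ K := convex_series_mem K hclK hcK b hKb bb hbbsum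
  have ha_tend : Tendsto (fun n => ∑ k ∈ Finset.range n, ((2:ℝ)^(k+1))⁻¹ • a k)
      atTop (𝓝 (u + bb)) := by
    have heq : ∀ n, ∑ k ∈ Finset.range n, ((2:ℝ)^(k+1))⁻¹ • a k =
        (∑ k ∈ Finset.range n, ((2:ℝ)^(k+1))⁻¹ • (a k - b k)) +
        ∑ k ∈ Finset.range n, ((2:ℝ)^(k+1))⁻¹ • b k := by
      intro n
      rw [← Finset.sum_add_distrib]
      apply Finset.sum_congr rfl
      intro k _
      rw [smul_sub]
      abel
    simp only [heq]
    exact htendd.add hbbsum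
  have haA : u + bb ∈ A := convex_series_mem A hclA hcA a hA (u + bb) ha_tend
  have := Set.sub_mem_sub haA hbbK
  simpa using this

theorem bounded_extremality_in_reflexive {X : Type*} [NormedAddCommGroup X]
    [NormedSpace ℝ X] [CompleteSpace X]
    (hrefl : Function.Surjective (NormedSpace.inclusionInDoubleDual ℝ X))
    (Ω₁ Ω₂ : Set X) (h₁ : Ω₁.Nonempty) (h₂ : Ω₂.Nonempty)
    (hcl₁ : IsClosed Ω₁) (hcl₂ : IsClosed Ω₂)
    (hc₁ : Convex ℝ Ω₁) (hc₂ : Convex ℝ Ω₂)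
    (hint : (interior (Ω₁ - Ω₂)).Nonempty)
    (hcore : (0 : X) ∈ Ω₁ - Ω₂ ∧
      ∀ v : X, ∃ γ > 0, ∀ t : ℝ, |t| < γ → t • v ∈ Ω₁ - Ω₂)
    (xb : X) (hxb : xb ∈ Ω₁ ∩ Ω₂) :
    ∀ r > 0, (0 : X) ∈ interior (Ω₁ - Ω₂ ∩ Metric.closedBall xb r) := by
  obtain ⟨hxb1, hxb2⟩ := hxb
  obtain ⟨h0mem, habs0⟩ := hcore
  intro r hr
  set K : Set X := Ω₂ ∩ Metric.closedBall xb r with hK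
  set E : Set X := Ω₁ - K with hE
  have hxbK : xb ∈ K := ⟨hxb2, Metric.mem_closedBall_self hr.le⟩
  have h0E : (0:X) ∈ E := by
    have h := Set.sub_mem_sub hxb1 hxbK (a := xb) (b := xb)
    rwa [sub_self] at h
  have hcK : Convex ℝ K := hc₂.inter (convex_closedBall xb r)
  have hclK : IsClosed K := hcl₂.inter Metric.isClosed_closedBall
  have hEconv : Convex ℝ E := hc₁.sub hcK
  -- E is absorbing
  have habsE : ∀ v : X, ∃ γ > 0, ∀ t : ℝ, |t| < γ → t • v ∈ E := by
    intro v
    obtain ⟨γ, hγ, hγS⟩ := habs0 v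
    have hp := hγS (γ/2) (by rw [abs_of_pos (by linarith)]; linarith)
    have hm := hγS (-(γ/2)) (by rw [abs_neg, abs_of_pos (by linarith)]; linarith)
    rw [Set.mem_sub] at hp hm
    obtain ⟨ap, hap, bp, hbp, hpe⟩ := hp
    obtain ⟨am, ham, bm, hbm, hme⟩ := hm
    set R : ℝ := ‖bp - xb‖ + ‖bm - xb‖ with hR
    have hR0 : 0 ≤ R := by positivity
    set lam : ℝ := min 1 (r / (R + 1)) with hlam
    have hlam_pos : 0 < lam := lt_min one_pos (by positivity)
    have hlam1 : lam ≤ 1 := min_le_left _ _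
    have hlam2 : lam ≤ r / (R + 1) := min_le_right _ _
    have hlamp : lam * ‖bp - xb‖ ≤ r := by
      have h1 : lam * ‖bp - xb‖ ≤ (r / (R+1)) * (R + 1) := by
        apply mul_le_mul hlam2 (by rw [hR]; nlinarith [norm_nonneg (bm - xb)])
          (norm_nonneg _) (by positivity)
      rwa [div_mul_cancel₀ r (by positivity : (R:ℝ) + 1 ≠ 0)] at h1
    have hlamm : lam * ‖bm - xb‖ ≤ r := by
      have h1 : lam * ‖bm - xb‖ ≤ (r / (R+1)) * (R + 1) := by
        apply mul_le_mul hlam2 (by rw [hR]; nlinarith [norm_nonneg (bp - xb)])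
          (norm_nonneg _) (by positivity)
      rwa [div_mul_cancel₀ r (by positivity : (R:ℝ) + 1 ≠ 0)] at h1
    refine ⟨lam * (γ/2), by positivity, ?_⟩
    intro t ht
    rcases le_or_gt 0 t with htpos | htneg
    · set μ : ℝ := t / (γ/2) with hμ
      have hμ0 : 0 ≤ μ := div_nonneg htpos (by linarith)
      have hμlam : μ ≤ lam := by
        rw [hμ, div_le_iff₀ (by linarith : (0:ℝ) < γ/2)]
        rw [abs_of_nonneg htpos] at ht
        linarith
      have hμ1 : μ ≤ 1 := le_trans hμlam hlam1
      have hdist : dist (μ•bp + (1-μ)•xb) xb ≤ r := by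
        rw [dist_eq_norm]
        have he : μ•bp + (1-μ)•xb - xb = μ • (bp - xb) := by
          rw [smul_sub, sub_smul, one_smul]; abel
        rw [he, norm_smul, Real.norm_eq_abs, abs_of_nonneg hμ0]
        calc μ * ‖bp - xb‖ ≤ lam * ‖bp - xb‖ :=
              mul_le_mul_of_nonneg_right hμlam (norm_nonneg _)
          _ ≤ r := hlamp
      refine Set.mem_sub.2 ⟨μ•ap + (1-μ)•xb,
        hc₁ hap hxb1 hμ0 (by linarith) (by ring),
        μ•bp + (1-μ)•xb,
        ⟨hc₂ hbp hxb2 hμ0 (by linarith) (by ring), Metric.mem_closedBall.2 hdist⟩, ?_⟩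
      have : μ•ap + (1-μ)•xb - (μ•bp + (1-μ)•xb) = μ • (ap - bp) := by
        rw [smul_sub]; abel
      rw [this, hpe, smul_smul]
      congr 1
      rw [hμ]; field_simp
    · set μ : ℝ := -t / (γ/2) with hμ
      have hμ0 : 0 ≤ μ := div_nonneg (by linarith) (by linarith)
      have hμlam : μ ≤ lam := by
        rw [hμ, div_le_iff₀ (by linarith : (0:ℝ) < γ/2)]
        rw [abs_of_neg htneg] at ht
        linarith
      have hμ1 : μ ≤ 1 := le_trans hμlam hlam1
      have hdist : dist (μ•bm + (1-μ)•xb) xb ≤ r := by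
        rw [dist_eq_norm]
        have he : μ•bm + (1-μ)•xb - xb = μ • (bm - xb) := by
          rw [smul_sub, sub_smul, one_smul]; abel
        rw [he, norm_smul, Real.norm_eq_abs, abs_of_nonneg hμ0]
        calc μ * ‖bm - xb‖ ≤ lam * ‖bm - xb‖ :=
              mul_le_mul_of_nonneg_right hμlam (norm_nonneg _)
          _ ≤ r := hlamm
      refine Set.mem_sub.2 ⟨μ•am + (1-μ)•xb,
        hc₁ ham hxb1 hμ0 (by linarith) (by ring),
        μ•bm + (1-μ)•xb,
        ⟨hc₂ hbm hxb2 hμ0 (by linarith) (by ring), Metric.mem_closedBall.2 hdist⟩, ?_⟩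
      have : μ•am + (1-μ)•xb - (μ•bm + (1-μ)•xb) = μ • (am - bm) := by
        rw [smul_sub]; abel
      rw [this, hme, smul_smul]
      congr 1
      rw [hμ]; field_simp
  -- apply Baire lemma to S = closure E ∩ -closure E
  set S : Set X := closure E ∩ (-(closure E)) with hS
  have hScl : IsClosed S := isClosed_closure.inter isClosed_closure.neg
  have hSconv : Convex ℝ S := hEconv.closure.inter hEconv.closure.neg
  have hS0 : (0:X) ∈ S := ⟨subset_closure h0E, by
    rw [Set.mem_neg, neg_zero]; exact subset_closure h0E⟩
  have hSsymm : ∀ x ∈ S, -x ∈ S := by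
    rintro x ⟨h1, h2⟩
    exact ⟨Set.mem_neg.1 h2, Set.mem_neg.2 (by simpa using h1)⟩
  have hSabs : ∀ v : X, ∃ γ > 0, ∀ t : ℝ, |t| < γ → t • v ∈ S := by
    intro v
    obtain ⟨γ, hγ, hγE⟩ := habsE v
    refine ⟨γ, hγ, fun t ht => ⟨subset_closure (hγE t ht), ?_⟩⟩
    rw [Set.mem_neg]
    have := hγE (-t) (by rwa [abs_neg])
    apply subset_closure
    simpa [neg_smul] using this
  have h0int : (0:X) ∈ interior S := baire_aux S hScl hSconv hS0 hSsymm hSabs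
  obtain ⟨δ, hδ, hballS⟩ := Metric.mem_nhds_iff.1 (mem_interior_iff_mem_nhds.1 h0int)
  have hballE : ball (0:X) δ ⊆ closure E := fun x hx => (hballS hx).1
  have hbd : ∀ b ∈ K, ‖b‖ ≤ ‖xb‖ + r := by
    rintro b ⟨-, hb⟩
    rw [Metric.mem_closedBall, dist_eq_norm] at hb
    calc ‖b‖ = ‖b - xb + xb‖ := by rw [sub_add_cancel]
      _ ≤ ‖b - xb‖ + ‖xb‖ := norm_add_le _ _
      _ ≤ ‖xb‖ + r := by linarith
  have hfinal : ball (0:X) (δ/2) ⊆ E :=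
    series_aux Ω₁ K hcl₁ hc₁ hclK hcK (‖xb‖ + r) hbd δ hδ hballE
  exact mem_interior.2 ⟨ball 0 (δ/2), hfinal, isOpen_ball, mem_ball_self (by linarith)⟩
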